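/- Let P = {(0,0),(1,0),(2,0),(3,0),(0,1),(2,1),(0,2),(1,2),(0,3)} and Q = {(-1,0),(0,0),(1,0),(2,0),(0,-1),(2,-1),(0,1),(0,2),(-1,2)} in ℤ². Then P and Q are polyominoes, P and Q are homometric, and Q is neither a translate of P nor a translate of −P. -/

import Mathlib

set_option maxRecDepth 20000

/-- Two points of `ℤ²` are adjacent if they differ by a unit vector. -/
def LatticeAdjacent (p q : ℤ × ℤ) : Prop :=
  (p.1 - q.1).natAbs + (p.2 - q.2).natAbs = 1

/-- A polyomino is a finite nonempty subset of `ℤ²` that is connected with respect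
to lattice adjacency. -/
def IsPolyomino (A : Finset (ℤ × ℤ)) : Prop :=
  A.Nonempty ∧ ∀ p ∈ A, ∀ q ∈ A,
    Relation.ReflTransGen (fun x y => x ∈ A ∧ y ∈ A ∧ LatticeAdjacent x y) p q

/-- Two finite subsets of `ℤ²` are homometric if `|A ∩ (A + x)| = |B ∩ (B + x)|`
for every `x ∈ ℤ²`. -/
def Homometric (A B : Finset (ℤ × ℤ)) : Prop :=
  ∀ x : ℤ × ℤ, (A ∩ A.image (· + x)).card = (B ∩ B.image (· + x)).card

/-- The polyomino `2L + L`, where `L = {(0,0),(1,0),(0,1)}`. -/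
def polyP : Finset (ℤ × ℤ) :=
  {(0,0), (1,0), (2,0), (3,0), (0,1), (2,1), (0,2), (1,2), (0,3)}

/-- The polyomino `2L - L`, where `L = {(0,0),(1,0),(0,1)}`. -/
def polyQ : Finset (ℤ × ℤ) :=
  {(-1,0), (0,0), (1,0), (2,0), (0,-1), (2,-1), (0,1), (0,2), (-1,2)}

instance (p q : ℤ × ℤ) : Decidable (LatticeAdjacent p q) := by
  unfold LatticeAdjacent; infer_instance

lemma card_inter_eq (A : Finset (ℤ × ℤ)) (x : ℤ × ℤ) :
    (A ∩ A.image (· + x)).card = ((A ×ˢ A).filter (fun p => p.1 - p.2 = x)).card := by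
  apply Finset.card_bij (fun a _ => (a, a - x))
  · intro a ha
    simp only [Finset.mem_inter, Finset.mem_image] at ha
    obtain ⟨h1, b, hb, hbx⟩ := ha
    simp only [Finset.mem_filter, Finset.mem_product]
    refine ⟨⟨h1, ?_⟩, by ring⟩
    have : a - x = b := by rw [← hbx]; ring
    rwa [this]
  · intro a _ b _ h
    exact congrArg Prod.fst h
  · intro p hp
    simp only [Finset.mem_filter, Finset.mem_product] at hp
    refine ⟨p.1, ?_, ?_⟩
    · simp only [Finset.mem_inter, Finset.mem_image]
      exact ⟨hp.1.1, p.2, hp.1.2, by rw [← hp.2]; ring⟩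
    · have : p.1 - x = p.2 := by rw [← hp.2]; ring
      rw [this]

lemma key : ∀ x ∈ ((polyP ×ˢ polyP).image (fun p => p.1 - p.2)) ∪
    ((polyQ ×ˢ polyQ).image (fun p => p.1 - p.2)),
    ((polyP ×ˢ polyP).filter (fun p => p.1 - p.2 = x)).card =
    ((polyQ ×ˢ polyQ).filter (fun p => p.1 - p.2 = x)).card := by decide

lemma homometricPQ : Homometric polyP polyQ := by
  intro x
  rw [card_inter_eq, card_inter_eq]
  by_cases hx : x ∈ ((polyP ×ˢ polyP).image (fun p => p.1 - p.2)) ∪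
      ((polyQ ×ˢ polyQ).image (fun p => p.1 - p.2))
  · exact key x hx
  · have h1 : (polyP ×ˢ polyP).filter (fun p => p.1 - p.2 = x) = ∅ := by
      rw [Finset.filter_eq_empty_iff]
      intro p hp hpx
      exact hx (Finset.mem_union_left _ (Finset.mem_image.mpr ⟨p, hp, hpx⟩))
    have h2 : (polyQ ×ˢ polyQ).filter (fun p => p.1 - p.2 = x) = ∅ := by
      rw [Finset.filter_eq_empty_iff]
      intro p hp hpx
      exact hx (Finset.mem_union_right _ (Finset.mem_image.mpr ⟨p, hp, hpx⟩))
    rw [h1, h2]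

section Connectivity

private abbrev RP : ℤ × ℤ → ℤ × ℤ → Prop :=
  fun x y => x ∈ polyP ∧ y ∈ polyP ∧ LatticeAdjacent x y
private abbrev RQ : ℤ × ℤ → ℤ × ℤ → Prop :=
  fun x y => x ∈ polyQ ∧ y ∈ polyQ ∧ LatticeAdjacent x y

lemma hubP : ∀ p ∈ polyP, Relation.ReflTransGen RP ((0:ℤ),(0:ℤ)) p := by
  intro p hp
  have h1 : Relation.ReflTransGen RP ((0:ℤ),(0:ℤ)) (1,0) := .single (by decide)
  have h2 : Relation.ReflTransGen RP ((0:ℤ),(0:ℤ)) (2,0) := h1.tail (by decide)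
  have h3 : Relation.ReflTransGen RP ((0:ℤ),(0:ℤ)) (3,0) := h2.tail (by decide)
  have h21 : Relation.ReflTransGen RP ((0:ℤ),(0:ℤ)) (2,1) := h2.tail (by decide)
  have v1 : Relation.ReflTransGen RP ((0:ℤ),(0:ℤ)) (0,1) := .single (by decide)
  have v2 : Relation.ReflTransGen RP ((0:ℤ),(0:ℤ)) (0,2) := v1.tail (by decide)
  have v3 : Relation.ReflTransGen RP ((0:ℤ),(0:ℤ)) (0,3) := v2.tail (by decide)
  have h12 : Relation.ReflTransGen RP ((0:ℤ),(0:ℤ)) (1,2) := v2.tail (by decide)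
  fin_cases hp
  · exact .refl
  · exact h1
  · exact h2
  · exact h3
  · exact v1
  · exact h21
  · exact v2
  · exact h12
  · exact v3

lemma hubQ : ∀ p ∈ polyQ, Relation.ReflTransGen RQ ((0:ℤ),(0:ℤ)) p := by
  intro p hp
  have hm1 : Relation.ReflTransGen RQ ((0:ℤ),(0:ℤ)) (-1,0) := .single (by decide)
  have h1 : Relation.ReflTransGen RQ ((0:ℤ),(0:ℤ)) (1,0) := .single (by decide)
  have h2 : Relation.ReflTransGen RQ ((0:ℤ),(0:ℤ)) (2,0) := h1.tail (by decide)
  have h2m : Relation.ReflTransGen RQ ((0:ℤ),(0:ℤ)) (2,-1) := h2.tail (by decide)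
  have v0 : Relation.ReflTransGen RQ ((0:ℤ),(0:ℤ)) (0,-1) := .single (by decide)
  have v1 : Relation.ReflTransGen RQ ((0:ℤ),(0:ℤ)) (0,1) := .single (by decide)
  have v2 : Relation.ReflTransGen RQ ((0:ℤ),(0:ℤ)) (0,2) := v1.tail (by decide)
  have vm2 : Relation.ReflTransGen RQ ((0:ℤ),(0:ℤ)) (-1,2) := v2.tail (by decide)
  fin_cases hp
  · exact hm1
  · exact .refl
  · exact h1
  · exact h2
  · exact v0
  · exact h2m
  · exact v1
  · exact v2
  · exact vm2

lemma symmRP : Symmetric RP := by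
  intro x y ⟨hx, hy, h⟩
  exact ⟨hy, hx, by unfold LatticeAdjacent at *; omega⟩

lemma symmRQ : Symmetric RQ := by
  intro x y ⟨hx, hy, h⟩
  exact ⟨hy, hx, by unfold LatticeAdjacent at *; omega⟩

lemma isPolyP : IsPolyomino polyP := by
  refine ⟨⟨(0,0), by decide⟩, fun p hp q hq => ?_⟩
  exact ((@Relation.ReflTransGen.stdSymm _ RP ⟨fun a b h => symmRP h⟩).symm _ _ (hubP p hp)).trans (hubP q hq)

lemma isPolyQ : IsPolyomino polyQ := by
  refine ⟨⟨(0,0), by decide⟩, fun p hp q hq => ?_⟩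
  exact ((@Relation.ReflTransGen.stdSymm _ RQ ⟨fun a b h => symmRQ h⟩).symm _ _ (hubQ p hp)).trans (hubQ q hq)

end Connectivity

/-- `polyP` and `polyQ` are homometric polyominoes, and `polyQ` is neither a translate
of `polyP` nor a translate of `-polyP`. -/
theorem polyP_polyQ_homometric_noncongruent :
    IsPolyomino polyP ∧ IsPolyomino polyQ ∧ Homometric polyP polyQ ∧
    ¬ (∃ t : ℤ × ℤ, polyQ = polyP.image (· + t) ∨ polyQ = polyP.image (fun p => t - p)) := by
  refine ⟨isPolyP, isPolyQ, homometricPQ, ?_⟩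
  rintro ⟨t, h | h⟩
  · have hs : (polyQ.sum fun p => p.1) = polyP.sum fun p => p.1 + t.1 := by
      rw [h, Finset.sum_image (by intro a _ b _ hab; exact add_right_cancel hab)]
      simp [Prod.fst_add]
    have h1 : (polyQ.sum fun p => p.1) = 3 := by decide
    have h2 : (polyP.sum fun p => p.1 + t.1) = 9 + 9 * t.1 := by
      rw [Finset.sum_add_distrib]
      have : (polyP.sum fun p => p.1) = 9 := by decide
      rw [this, Finset.sum_const, show polyP.card = 9 from by decide, nsmul_eq_mul]
      push_cast
      ring
    omega
  · have hs : (polyQ.sum fun p => p.1) = polyP.sum fun p => t.1 - p.1 := by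
      rw [h, Finset.sum_image (by
        intro a _ b _ hab
        have h1 : t.1 - a.1 = t.1 - b.1 := congrArg Prod.fst hab
        have h2 : t.2 - a.2 = t.2 - b.2 := congrArg Prod.snd hab
        exact Prod.ext (by omega) (by omega))]
      simp [Prod.fst_sub]
    have h1 : (polyQ.sum fun p => p.1) = 3 := by decide
    have h2 : (polyP.sum fun p => t.1 - p.1) = 9 * t.1 - 9 := by
      rw [Finset.sum_sub_distrib]
      have : (polyP.sum fun p => p.1) = 9 := by decide
      rw [this, Finset.sum_const, show polyP.card = 9 from by decide, nsmul_eq_mul]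
      push_cast
      ring
    omega
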